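/- Suppose h = 1/4 and let E₁ = (1/2, 0), J = the matrix [[0, −q/2], [0, −s·m]] of the Fréchet derivative of F at E₁, v = (1, 0) and w = (2s·m, −q). Then: (i) J·v = 0 and Jᵀ·w = 0, i.e. v and w are eigenvectors of J and Jᵀ for the eigenvalue 0; (ii) the partial derivative of F with respect to the parameter h at (E₁, 1/4) is the constant vector (−1, 0), and w·(−1, 0) = −2s·m ≠ 0; (iii) the second directional derivative D²F(E₁)(v, v) equals (−2, 0), and w·(−2, 0) = −4s·m ≠ 0. (These are Sotomayor's transversality conditions for a saddle-node bifurcation of the system at E₁ at the critical parameter value h₂ = 1/4.) -/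

import Mathlib

/-- The predator–prey vector field
    `F(x,y) = (x(1-x) - q x y - h, s y (1 - y/x)(y - m))`. -/
noncomputable def F (q s h m : ℝ) (p : ℝ × ℝ) : ℝ × ℝ :=
  (p.1 * (1 - p.1) - q * p.1 * p.2 - h, s * p.2 * (1 - p.2 / p.1) * (p.2 - m))

/-- The continuous linear map `ℝ² → ℝ²` with matrix `[[a, b], [c, d]]`. -/
noncomputable def clm (a b c d : ℝ) : (ℝ × ℝ) →L[ℝ] (ℝ × ℝ) :=
  (a • ContinuousLinearMap.fst ℝ ℝ ℝ + b • ContinuousLinearMap.snd ℝ ℝ ℝ).prod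
    (c • ContinuousLinearMap.fst ℝ ℝ ℝ + d • ContinuousLinearMap.snd ℝ ℝ ℝ)

lemma clm_apply' (a b c d : ℝ) (w : ℝ × ℝ) :
    clm a b c d w = (a * w.1 + b * w.2, c * w.1 + d * w.2) := by
  simp [clm]

lemma hFd (q s h m : ℝ) (p : ℝ × ℝ) (hp : p.1 ≠ 0) :
    HasFDerivAt (F q s h m)
      (clm (1 - 2*p.1 - q*p.2) (-(q*p.1)) (s*p.2^2*(p.2-m)/p.1^2)
        (s*(1 - 2*p.2/p.1)*(p.2-m) + s*p.2*(1-p.2/p.1))) p := by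
  have hx : HasFDerivAt (fun p : ℝ × ℝ => p.1) (ContinuousLinearMap.fst ℝ ℝ ℝ) p :=
    hasFDerivAt_fst
  have hy : HasFDerivAt (fun p : ℝ × ℝ => p.2) (ContinuousLinearMap.snd ℝ ℝ ℝ) p :=
    hasFDerivAt_snd
  have h1 := ((hx.mul ((hasFDerivAt_const (1:ℝ) p).sub hx)).sub
      (((hasFDerivAt_const q p).mul hx).mul hy)).sub_const h
  have hinv := (hasDerivAt_inv hp).comp_hasFDerivAt p hx
  have hdiv : HasFDerivAt (fun p : ℝ × ℝ => p.2 / p.1) _ p := hy.mul hinv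
  have h2 := ((((hasFDerivAt_const s p).mul hy).mul
      ((hasFDerivAt_const (1:ℝ) p).sub hdiv)).mul (hy.sub_const m))
  have := h1.prodMk h2
  convert this using 1
  · rfl
  · rfl
  · rfl
  · rfl
  refine ContinuousLinearMap.ext fun w => ?_
  rw [clm_apply']
  simp [ContinuousLinearMap.prod_apply]
  constructor
  · ring
  · field_simp
    ring

lemma secondDeriv (q s h m : ℝ) :
    iteratedFDeriv ℝ 2 (F q s h m) ((1/2 : ℝ), (0 : ℝ))
      ![((1 : ℝ), (0 : ℝ)), ((1 : ℝ), (0 : ℝ))] = ((-2 : ℝ), (0 : ℝ)) := by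
  set z : ℝ × ℝ := ((1/2 : ℝ), (0 : ℝ)) with hz
  have hz1 : z.1 ≠ 0 := by norm_num [hz]
  -- eventual equality of fderiv with explicit G
  have hop : IsOpen {p : ℝ × ℝ | p.1 ≠ 0} := isOpen_ne.preimage continuous_fst
  have hev : fderiv ℝ (F q s h m) =ᶠ[nhds z]
      (fun p => clm (1 - 2*p.1 - q*p.2) (-(q*p.1)) (s*p.2^2*(p.2-m)/p.1^2)
        (s*(1 - 2*p.2/p.1)*(p.2-m) + s*p.2*(1-p.2/p.1))) :=
    Filter.eventually_of_mem (hop.mem_nhds hz1) (fun p hp => (hFd q s h m p hp).fderiv)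
  -- differentiate G at z
  have hx : HasFDerivAt (fun p : ℝ × ℝ => p.1) (ContinuousLinearMap.fst ℝ ℝ ℝ) z :=
    hasFDerivAt_fst
  have hy : HasFDerivAt (fun p : ℝ × ℝ => p.2) (ContinuousLinearMap.snd ℝ ℝ ℝ) z :=
    hasFDerivAt_snd
  have hinv := (hasDerivAt_inv hz1).comp_hasFDerivAt z hx
  have hsq : HasFDerivAt (fun p : ℝ × ℝ => p.1*p.1) _ z := hx.mul hx
  have hz2 : z.1 * z.1 ≠ 0 := mul_ne_zero hz1 hz1
  have hinv2 := (hasDerivAt_inv hz2).comp_hasFDerivAt z hsq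
  have ha := ((hasFDerivAt_const (1:ℝ) z).sub ((hasFDerivAt_const (2:ℝ) z).mul hx)).sub
      ((hasFDerivAt_const q z).mul hy)
  have hb := ((hasFDerivAt_const q z).mul hx).neg
  have hc := ((((hasFDerivAt_const s z).mul hy).mul hy).mul (hy.sub_const m)).mul hinv2
  have hd := ((((hasFDerivAt_const s z).mul ((hasFDerivAt_const (1:ℝ) z).sub
      (((hasFDerivAt_const (2:ℝ) z).mul hy).mul hinv))).mul (hy.sub_const m)).add
      (((hasFDerivAt_const s z).mul hy).mul
        ((hasFDerivAt_const (1:ℝ) z).sub (hy.mul hinv))))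
  have hG := (((ha.smul_const (clm 1 0 0 0)).add (hb.smul_const (clm 0 1 0 0))).add
      (hc.smul_const (clm 0 0 1 0))).add (hd.smul_const (clm 0 0 0 1))
  have hfun : (fun p : ℝ × ℝ => clm (1 - 2*p.1 - q*p.2) (-(q*p.1)) (s*p.2^2*(p.2-m)/p.1^2)
        (s*(1 - 2*p.2/p.1)*(p.2-m) + s*p.2*(1-p.2/p.1)))
      = (fun p : ℝ × ℝ =>
        ((1 - 2*p.1 - q*p.2) • clm 1 0 0 0 + (-(q*p.1)) • clm 0 1 0 0)
          + (s*p.2*p.2*(p.2-m) * ((p.1*p.1)⁻¹)) • clm 0 0 1 0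
          + (s*(1 - 2*p.2*(p.1)⁻¹)*(p.2-m) + s*p.2*(1-p.2*(p.1)⁻¹)) • clm 0 0 0 1) := by
    funext p
    refine ContinuousLinearMap.ext fun w => ?_
    simp [clm_apply', div_eq_mul_inv, Prod.ext_iff]
    constructor <;> ring
  have hG' : HasFDerivAt (fun p : ℝ × ℝ =>
        ((1 - 2*p.1 - q*p.2) • clm 1 0 0 0 + (-(q*p.1)) • clm 0 1 0 0)
          + (s*p.2*p.2*(p.2-m) * ((p.1*p.1)⁻¹)) • clm 0 0 1 0
          + (s*(1 - 2*p.2*(p.1)⁻¹)*(p.2-m) + s*p.2*(1-p.2*(p.1)⁻¹)) • clm 0 0 0 1) _ z := hG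
  rw [iteratedFDeriv_two_apply, hev.fderiv_eq, hfun, hG'.fderiv]
  simp [clm_apply', hz, Prod.ext_iff]

/-- Sotomayor's transversality conditions for a saddle-node bifurcation of the family
`F q s h m` at `E₁ = (1/2, 0)` at the critical parameter value `h₂ = 1/4`: with
`J = [[0, -q/2], [0, -s m]]` the matrix of the Fréchet derivative of `F` at `E₁`,
`v = (1, 0)`, `w = (2 s m, -q)`: (i) `J v = 0` and `Jᵀ w = 0`; (ii) the derivative of `F`
in the parameter `h` at `(E₁, 1/4)` is `(-1, 0)` and `w ⬝ (-1, 0) = -2 s m ≠ 0`;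
(iii) `D²F(E₁)((1,0),(1,0)) = (-2, 0)` and `w ⬝ (-2, 0) = -4 s m ≠ 0`. -/
theorem stmt18 (q s h m : ℝ) (hq : 0 < q) (hs : 0 < s) (hh : 0 < h)
    (hm0 : 0 < m) (hm1 : m < 1) (hh4 : h = 1/4) :
    HasFDerivAt (F q s h m) (clm 0 (-q/2) 0 (-s*m)) ((1/2 : ℝ), (0 : ℝ)) ∧
    (!![0, -q/2; 0, -s*m] : Matrix (Fin 2) (Fin 2) ℝ).mulVec ![1, 0] = 0 ∧
    (!![0, -q/2; 0, -s*m] : Matrix (Fin 2) (Fin 2) ℝ).transpose.mulVec ![2*s*m, -q]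
      = 0 ∧
    HasDerivAt (fun h' : ℝ => F q s h' m ((1/2 : ℝ), (0 : ℝ)))
      (((-1 : ℝ), (0 : ℝ))) (1/4) ∧
    dotProduct ![2*s*m, -q] ![(-1 : ℝ), 0] = -2*s*m ∧ -2*s*m ≠ 0 ∧
    iteratedFDeriv ℝ 2 (F q s h m) ((1/2 : ℝ), (0 : ℝ))
      ![((1 : ℝ), (0 : ℝ)), ((1 : ℝ), (0 : ℝ))] = ((-2 : ℝ), (0 : ℝ)) ∧
    dotProduct ![2*s*m, -q] ![(-2 : ℝ), 0] = -4*s*m ∧ -4*s*m ≠ 0 := by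
  have hsm : s * m ≠ 0 := ne_of_gt (mul_pos hs hm0)
  refine ⟨?_, ?_, ?_, ?_, ?_, ?_, secondDeriv q s h m, ?_, ?_⟩
  · have := hFd q s h m ((1/2 : ℝ), (0 : ℝ)) (by norm_num)
    convert this using 2 <;> norm_num <;> ring
  · funext i
    fin_cases i <;> simp [Matrix.mulVec, dotProduct]
  · funext i
    fin_cases i <;> simp [Matrix.mulVec, dotProduct] <;> ring
  · have h1 : HasDerivAt (fun h' : ℝ =>
        ((1:ℝ)/2 * (1 - 1/2) - q * (1/2) * 0 - h')) (-1 : ℝ) (1/4) := by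
      exact ((hasDerivAt_const (1/4 : ℝ)
        ((1:ℝ)/2 * (1 - 1/2) - q * (1/2) * 0)).sub (hasDerivAt_id' (1/4 : ℝ))).congr_deriv (by norm_num)
    have h2 : HasDerivAt (fun _ : ℝ =>
        (s * 0 * (1 - 0 / (1/2 : ℝ)) * (0 - m))) (0 : ℝ) (1/4) := hasDerivAt_const _ _
    exact h1.prodMk h2
  · simp only [dotProduct, Fin.sum_univ_two, Matrix.cons_val_zero,
      Matrix.cons_val_one, Matrix.head_cons]
    ring
  · intro hc; apply hsm; nlinarith
  · simp only [dotProduct, Fin.sum_univ_two, Matrix.cons_val_zero,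
      Matrix.cons_val_one, Matrix.head_cons]
    ring
  · intro hc; apply hsm; nlinarith
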